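/- Let R be a ring, M a left R-module, and A ⊆ M a subgroup of the additive group of M. Then A is an R-submodule of M if and only if its annihilator Γ(A) = {χ ∈ M̂ : χ|_A ≡ 1} is an R-submodule of the right R-module M̂ = Hom(M, 𝕋), where (χr)(x) = χ(rx). -/

import Mathlib

/-- The natural additive map `ℚ/ℤ → ℝ/ℤ`. -/
noncomputable def ratAddCircleToReal : AddCircle (1 : ℚ) →+ AddCircle (1 : ℝ) :=
  QuotientAddGroup.map _ _ (Rat.castHom ℝ).toAddMonoidHom (by
    rintro q ⟨n, rfl⟩
    exact ⟨n, by push_cast; simp⟩)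

lemma ratAddCircleToReal_injective : Function.Injective ratAddCircleToReal := by
  rw [injective_iff_map_eq_zero]
  intro x hx
  induction x using QuotientAddGroup.induction_on with
  | H q =>
    have : ratAddCircleToReal (q : AddCircle (1:ℚ)) = ((q : ℝ) : AddCircle (1:ℝ)) := rfl
    rw [this] at hx
    obtain ⟨n, hn⟩ := (AddCircle.coe_eq_zero_iff _).mp hx
    rw [zsmul_eq_mul, mul_one] at hn
    have : q = (n : ℚ) := by exact_mod_cast hn.symm
    subst this
    exact (AddCircle.coe_eq_zero_iff _).mpr ⟨n, by simp⟩

/-- An injective additive character `ℚ/ℤ → Circle`. -/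
noncomputable def ratCircleChar : AddChar (AddCircle (1 : ℚ)) Circle where
  toFun x := AddCircle.toCircle (ratAddCircleToReal x)
  map_zero_eq_one' := by simp
  map_add_eq_mul' x y := by show AddCircle.toCircle (ratAddCircleToReal (x + y)) = AddCircle.toCircle (ratAddCircleToReal x) * AddCircle.toCircle (ratAddCircleToReal y); rw [map_add, AddCircle.toCircle_add]

lemma ratCircleChar_eq_one_iff {x : AddCircle (1 : ℚ)} : ratCircleChar x = 1 ↔ x = 0 := by
  constructor
  · intro h
    have h1 : AddCircle.toCircle (ratAddCircleToReal x) = AddCircle.toCircle (0 : AddCircle (1:ℝ)) := by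
      simpa [ratCircleChar, AddChar.coe_mk] using h
    have := AddCircle.injective_toCircle (one_ne_zero) h1
    exact ratAddCircleToReal_injective (by simpa using this)
  · rintro rfl; simp [ratCircleChar, AddChar.coe_mk]

/-- A subgroup `A` of a left `R`-module `M` is an `R`-submodule if and only if its
annihilator `Γ(A) = {χ ∈ M̂ : χ|_A ≡ 1}` is a submodule of the right `R`-module
`M̂ = Hom(M, 𝕋)`, whose action is `(χ·r)(x) = χ(r•x)`. -/
theorem addSubgroup_smul_closed_iff_annihilator_smul_closed {R M : Type*} [Ring R]
    [AddCommGroup M] [Module R M] (A : AddSubgroup M) :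
    (∀ (r : R), ∀ a ∈ A, r • a ∈ A) ↔
      (∀ χ : AddChar M Circle, (∀ a ∈ A, χ a = 1) →
        ∀ (r : R), ∀ a ∈ A, χ (r • a) = 1) := by
  constructor
  · intro hA χ hχ r a ha
    exact hχ _ (hA r a ha)
  · intro h r a ha
    by_contra hra
    -- build a character of M ⧸ A detecting `r • a`
    have hne : (QuotientAddGroup.mk (r • a) : M ⧸ A) ≠ 0 := by
      simpa [QuotientAddGroup.eq_zero_iff] using hra
    obtain ⟨c, hc⟩ := CharacterModule.exists_character_apply_ne_zero_of_ne_zero hne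
    set χ : AddChar M Circle :=
      { toFun := fun x => ratCircleChar (c (QuotientAddGroup.mk x))
        map_zero_eq_one' := by simp
        map_add_eq_mul' := fun x y => by
          simp [QuotientAddGroup.mk_add, map_add, AddChar.map_add_eq_mul] }
    have hχA : ∀ b ∈ A, χ b = 1 := by
      intro b hb
      have : (QuotientAddGroup.mk b : M ⧸ A) = 0 := (QuotientAddGroup.eq_zero_iff _).mpr hb
      show ratCircleChar (c (QuotientAddGroup.mk b)) = 1
      rw [this, map_zero, AddChar.map_zero_eq_one]
    have := h χ hχA r a ha
    have : ratCircleChar (c (QuotientAddGroup.mk (r • a))) = 1 := this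
    exact hc (ratCircleChar_eq_one_iff.mp this)
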